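/- Let (Γ, T, n⊥, n, κ_g, τ_g) be a closed asymptotic curve in ℝ³ and u a unit vector with u × T(t) ≠ 0 for all t; set u⊥(t) := (u × T(t))/|u × T(t)|. Let θ : ℝ → ℝ be a C¹ function with u⊥(t) = cos(θ(t))·n⊥(t) + sin(θ(t))·n(t) for all t. If ⟨u, n(t₀)⟩ = 0 at some t₀ (equivalently u⊥(t₀) = ± n(t₀)), then θ′(t₀) = −τ_g(t₀). In particular θ′(t₀) ≠ 0, so (0, ±1) are regular values of the map e^{iθ}. -/

import Mathlib

open Real intervalIntegral

noncomputable section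

/-- The cross product on `EuclideanSpace ℝ (Fin 3)`. -/
def cross3 (a b : EuclideanSpace ℝ (Fin 3)) : EuclideanSpace ℝ (Fin 3) :=
  (EuclideanSpace.equiv (Fin 3) ℝ).symm
    (crossProduct ((EuclideanSpace.equiv (Fin 3) ℝ) a) ((EuclideanSpace.equiv (Fin 3) ℝ) b))

lemma inner3 (a b : EuclideanSpace ℝ (Fin 3)) :
    (inner ℝ a b : ℝ) = a 0 * b 0 + a 1 * b 1 + a 2 * b 2 := by
  simp [PiLp.inner_apply, Fin.sum_univ_three]; ring

lemma cross3_apply (a b : EuclideanSpace ℝ (Fin 3)) (i : Fin 3) :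
    cross3 a b i = ![a 1 * b 2 - a 2 * b 1, a 2 * b 0 - a 0 * b 2, a 0 * b 1 - a 1 * b 0] i := by
  simp [cross3, crossProduct]

lemma cross_inner_cross (a b c d : EuclideanSpace ℝ (Fin 3)) :
    (inner ℝ (cross3 a b) (cross3 c d) : ℝ)
      = (inner ℝ a c : ℝ) * (inner ℝ b d : ℝ) - (inner ℝ a d : ℝ) * (inner ℝ b c : ℝ) := by
  simp [inner3, cross3_apply, Fin.sum_univ_three]; ring

lemma inner_self_cross (a b : EuclideanSpace ℝ (Fin 3)) :
    (inner ℝ a (cross3 a b) : ℝ) = 0 := by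
  simp [inner3, cross3_apply, Fin.sum_univ_three]; ring

lemma cross_inner_comm (a b c : EuclideanSpace ℝ (Fin 3)) :
    (inner ℝ (cross3 a b) c : ℝ) = -(inner ℝ a (cross3 c b) : ℝ) := by
  simp [inner3, cross3_apply, Fin.sum_univ_three]; ring

/-- At a zero of `⟨u, n⟩`, the angle `θ` of `u⊥ = (u × T)/|u × T|` measured in the frame
`(n⊥, n)` satisfies `θ′ = −τ_g ≠ 0`; so `(0, ±1)` are regular values of `e^{iθ}`. -/
theorem stmt7
    (Γ n : ℝ → EuclideanSpace ℝ (Fin 3)) (κg τg : ℝ → ℝ)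
    (hΓ : ContDiff ℝ 2 Γ) (hΓper : Function.Periodic Γ (2 * π))
    (hT1 : ∀ t, ‖deriv Γ t‖ = 1)
    (hn : ContDiff ℝ 1 n) (hnper : Function.Periodic n (2 * π))
    (hn1 : ∀ t, ‖n t‖ = 1)
    (hnT : ∀ t, (inner ℝ (n t) (deriv Γ t) : ℝ) = 0)
    (hκcont : Continuous κg) (hκper : Function.Periodic κg (2 * π))
    (hτcont : Continuous τg) (hτper : Function.Periodic τg (2 * π))
    (hτ : ∀ t, τg t ≠ 0)
    (hDarboux1 : ∀ t, deriv (deriv Γ) t = κg t • cross3 (n t) (deriv Γ t))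
    (hDarboux2 : ∀ t, deriv (fun s => cross3 (n s) (deriv Γ s)) t
      = -κg t • deriv Γ t + τg t • n t)
    (hDarboux3 : ∀ t, deriv n t = -τg t • cross3 (n t) (deriv Γ t))
    (u : EuclideanSpace ℝ (Fin 3)) (hu : ‖u‖ = 1)
    (huT : ∀ t, cross3 u (deriv Γ t) ≠ 0)
    (θ : ℝ → ℝ) (hθ : ContDiff ℝ 1 θ)
    (hθframe : ∀ t, ‖cross3 u (deriv Γ t)‖⁻¹ • cross3 u (deriv Γ t)
      = cos (θ t) • cross3 (n t) (deriv Γ t) + sin (θ t) • n t) :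
    ∀ t₀ : ℝ, (inner ℝ u (n t₀) : ℝ) = 0 →
      deriv θ t₀ = -τg t₀ ∧ deriv θ t₀ ≠ 0 := by
  intro t₀ hA0
  have hρ0 : ∀ t, ‖cross3 u (deriv Γ t)‖ ≠ 0 := fun t => norm_ne_zero_iff.mpr (huT t)
  have hTT : ∀ t, (inner ℝ (deriv Γ t) (deriv Γ t) : ℝ) = 1 := by
    intro t; rw [real_inner_self_eq_norm_sq, hT1]; norm_num
  have hnn : ∀ t, (inner ℝ (n t) (n t) : ℝ) = 1 := by
    intro t; rw [real_inner_self_eq_norm_sq, hn1]; norm_num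
  have hTn : ∀ t, (inner ℝ (deriv Γ t) (n t) : ℝ) = 0 := by
    intro t; rw [real_inner_comm]; exact hnT t
  -- A t = ρ t * cos θ t
  have hAρ : ∀ t, (inner ℝ u (n t) : ℝ) = ‖cross3 u (deriv Γ t)‖ * cos (θ t) := by
    intro t
    have E := congrArg (fun v : EuclideanSpace ℝ (Fin 3) =>
      (inner ℝ v (cross3 (n t) (deriv Γ t)) : ℝ)) (hθframe t)
    simp only [inner_add_left, real_inner_smul_left, cross_inner_cross, inner_self_cross,
      hTT, hnn, hnT, hTn, mul_one, mul_zero, sub_zero, add_zero, one_mul, zero_mul] at E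
    rw [← E, ← mul_assoc, mul_inv_cancel₀ (hρ0 t), one_mul]
  -- B t = -(ρ t * sin θ t)
  have hBρ : ∀ t, (inner ℝ u (cross3 (n t) (deriv Γ t)) : ℝ)
      = -(‖cross3 u (deriv Γ t)‖ * sin (θ t)) := by
    intro t
    have E := congrArg (fun v : EuclideanSpace ℝ (Fin 3) =>
      (inner ℝ v (n t) : ℝ)) (hθframe t)
    simp only [inner_add_left, real_inner_smul_left, cross_inner_comm, inner_self_cross,
      hnn, neg_zero, mul_zero, mul_one, zero_add, mul_neg, zero_mul] at E
    rw [← E, mul_neg, neg_neg, ← mul_assoc, mul_inv_cancel₀ (hρ0 t), one_mul]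
  have hcos0 : cos (θ t₀) = 0 := by
    have h := hAρ t₀
    rw [hA0] at h
    rcases mul_eq_zero.mp h.symm with h' | h'
    · exact absurd h' (hρ0 t₀)
    · exact h'
  have hsin : sin (θ t₀) ≠ 0 := by
    intro h
    have := sin_sq_add_cos_sq (θ t₀)
    rw [h, hcos0] at this; norm_num at this
  have hTdiff : Differentiable ℝ (deriv Γ) := by
    have h2 : ContDiff ℝ (1 + 1 : ℕ) Γ := by norm_num [hΓ]
    exact ((contDiff_succ_iff_deriv (n := 1)).mp (by norm_num [hΓ])).2.2.differentiable one_ne_zero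
  have hgd : DifferentiableAt ℝ (fun s => cross3 u (deriv Γ s)) t₀ :=
    ((EuclideanSpace.equiv (Fin 3) ℝ).symm.differentiableAt).comp _
      (((crossProduct ((EuclideanSpace.equiv (Fin 3) ℝ) u)).toContinuousLinearMap.differentiableAt).comp _
        (((EuclideanSpace.equiv (Fin 3) ℝ).differentiableAt).comp _ (hTdiff t₀)))
  have hρd : DifferentiableAt ℝ (fun s => ‖cross3 u (deriv Γ s)‖) t₀ := hgd.norm ℝ (huT t₀)
  have hAderiv : HasDerivAt (fun t => (inner ℝ u (n t) : ℝ)) (inner ℝ u (deriv n t₀)) t₀ :=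
    ((hasDerivAt_const t₀ u).inner ℝ ((hn.differentiable one_ne_zero t₀).hasDerivAt)).congr_deriv
      (by simp)
  have hF2 : HasDerivAt (fun t => ‖cross3 u (deriv Γ t)‖ * cos (θ t))
      (deriv (fun s => ‖cross3 u (deriv Γ s)‖) t₀ * cos (θ t₀)
        + ‖cross3 u (deriv Γ t₀)‖ * (-sin (θ t₀) * deriv θ t₀)) t₀ :=
    hρd.hasDerivAt.mul ((hθ.differentiable one_ne_zero t₀).hasDerivAt.cos)
  have hEq : (fun t => (inner ℝ u (n t) : ℝ))
      = fun t => ‖cross3 u (deriv Γ t)‖ * cos (θ t) := funext hAρ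
  have huniq : (inner ℝ u (deriv n t₀) : ℝ)
      = deriv (fun s => ‖cross3 u (deriv Γ s)‖) t₀ * cos (θ t₀)
        + ‖cross3 u (deriv Γ t₀)‖ * (-sin (θ t₀) * deriv θ t₀) :=
    hAderiv.unique (hEq ▸ hF2)
  have hlhs : (inner ℝ u (deriv n t₀) : ℝ) = τg t₀ * (‖cross3 u (deriv Γ t₀)‖ * sin (θ t₀)) := by
    rw [hDarboux3 t₀, real_inner_smul_right, hBρ t₀]; ring
  rw [hlhs, hcos0] at huniq
  have hθ' : deriv θ t₀ = -τg t₀ := by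
    have h1 : ‖cross3 u (deriv Γ t₀)‖ * sin (θ t₀) * (τg t₀ + deriv θ t₀) = 0 := by
      nlinarith [huniq]
    have h2 : τg t₀ + deriv θ t₀ = 0 := by
      rcases mul_eq_zero.mp h1 with h | h
      · exact absurd (mul_eq_zero.mp h) (by push_neg; exact ⟨hρ0 t₀, hsin⟩)
      · exact h
    linarith
  exact ⟨hθ', by rw [hθ']; simpa using hτ t₀⟩
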